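/- arXiv:1811.06189 — 2 statements merged into one kernel-verified Lean document; each statement's English description precedes it below -/
import Mathlib

section
/- Let Ω^∨ be a join-closed move ensemble. Then join(lim(Ω^∨)) = join(arblim(Ω^∨)), where lim(Ω^∨) and arblim(Ω^∨) are the smallest supersets of Ω^∨ satisfying the axioms (lim) and (arblim), respectively. -/
open Filter Set

noncomputable section

/-- The unrestricted translation (`b = false`) or reflection (`b = true`)
with parameter `p`: `x ↦ x + p`, resp. `x ↦ p - x`. -/
def uEval (b : Bool) (p : ℝ) (x : ℝ) : ℝ := if b then p - x else x + p

/-- A restricted move `γ|_D`: a translation (`isRefl = false`) or a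
reflection (`isRefl = true`) together with a domain. -/
structure Move where
  isRefl : Bool
  param : ℝ
  dom : Set ℝ

namespace Move

def eval (m : Move) : ℝ → ℝ := uEval m.isRefl m.param

/-- The character: `+1` for translations, `-1` for reflections. -/
def chi (m : Move) : ℝ := if m.isRefl then -1 else 1

def image (m : Move) : Set ℝ := m.eval '' m.dom

def graph (m : Move) : Set (ℝ × ℝ) := (fun x => (x, m.eval x)) '' m.dom

/-- Domains of moves must be open intervals or empty. -/
def ValidDom (D : Set ℝ) : Prop := IsOpen D ∧ D.OrdConnected

/-- A valid move: open-interval-or-empty domain; moves with empty domain are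
normalized (`param = 0`), so that there are exactly two empty moves, one of
each character. -/
def Valid (m : Move) : Prop := ValidDom m.dom ∧ (m.dom = ∅ → m.param = 0)

/-- The move `γ|_D` (normalized representative). -/
def mk' (b : Bool) (p : ℝ) (D : Set ℝ) : Move :=
  letI : Decidable (D = ∅) := Classical.dec _
  ⟨b, if D = ∅ then 0 else p, D⟩

/-- Composition of moves: `γ₂|_{D₂} ∘ γ₁|_{D₁} = (γ₂ ∘ γ₁)|_{D₁ ∩ γ₁⁻¹ D₂}`. -/
def comp (m2 m1 : Move) : Move :=
  mk' (m2.isRefl != m1.isRefl)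
    (if m2.isRefl then m2.param - m1.param else m1.param + m2.param)
    (m1.dom ∩ m1.eval ⁻¹' m2.dom)

/-- Inverse of a move: `(γ|_D)⁻¹ = γ⁻¹|_{γ(D)}`. -/
def inv (m : Move) : Move :=
  mk' m.isRefl (if m.isRefl then m.param else -m.param) (m.eval '' m.dom)

/-- The restriction partial order: `m1` is a restriction of `m2`. -/
def le (m1 m2 : Move) : Prop :=
  m1.isRefl = m2.isRefl ∧ m1.dom ⊆ m2.dom ∧ ∀ x ∈ m1.dom, m1.eval x = m2.eval x

end Move

/-- A move ensemble: a set of (valid) moves. -/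
def IsMoveEnsemble (Ω : Set Move) : Prop := ∀ m ∈ Ω, m.Valid

/-- A move semigroup: a move ensemble closed under composition and inverse. -/
def IsMoveSemigroup (Γ : Set Move) : Prop :=
  IsMoveEnsemble Γ ∧ (∀ m1 ∈ Γ, ∀ m2 ∈ Γ, Move.comp m2 m1 ∈ Γ) ∧
    (∀ m ∈ Γ, Move.inv m ∈ Γ)

/-- `⟨Ω⟩`: the smallest move semigroup containing `Ω`. -/
def semi (Ω : Set Move) : Set Move := ⋂₀ {Γ | IsMoveSemigroup Γ ∧ Ω ⊆ Γ}

/-- Axiom (restrict). -/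
def RestrictClosed (Ω : Set Move) : Prop :=
  ∀ m ∈ Ω, ∀ D' : Set ℝ, D' ⊆ m.dom → Move.ValidDom D' →
    Move.mk' m.isRefl m.param D' ∈ Ω

/-- The restriction closure of an ensemble. -/
def restrictCl (Ω : Set Move) : Set Move := ⋂₀ {Γ | RestrictClosed Γ ∧ Ω ⊆ Γ}

/-- Join-closed: restriction-closed and closed under continuation (joins). -/
def JoinClosed (Ω : Set Move) : Prop :=
  RestrictClosed Ω ∧
    ∀ (b : Bool) (p : ℝ) (J : Set (Set ℝ)), J.Nonempty →
      (∀ I ∈ J, Move.mk' b p I ∈ Ω) → (⋃₀ J).OrdConnected →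
      Move.mk' b p (⋃₀ J) ∈ Ω

/-- `join(Ω)`: the smallest join-closed ensemble containing `Ω`. -/
def joinCl (Ω : Set Move) : Set Move := ⋂₀ {Γ | JoinClosed Γ ∧ Ω ⊆ Γ}

/-- `joinsemi(Ω) = join(⟨Ω⟩)`: the joined move semigroup generated by `Ω`. -/
def joinsemi (Ω : Set Move) : Set Move := joinCl (semi Ω)

/-- `θ` respects the move `γ|_D`: `θ(γ(x)) = χ(γ)·θ(x) + c` on `D`. -/
def Respects (θ : ℝ → ℝ) (m : Move) : Prop :=
  ∃ c : ℝ, ∀ x ∈ m.dom, θ (m.eval x) = m.chi * θ x + c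

/-- `θ` respects each move of the ensemble `Ω`. -/
def RespectsAll (θ : ℝ → ℝ) (Ω : Set Move) : Prop := ∀ m ∈ Ω, Respects θ m

/-- All translation moves with graph contained in `O`. -/
def tMoves (O : Set (ℝ × ℝ)) : Set Move :=
  {m | m.isRefl = false ∧ m.Valid ∧ m.graph ⊆ O}

/-- All reflection moves with graph contained in `O`. -/
def rMoves (O : Set (ℝ × ℝ)) : Set Move :=
  {m | m.isRefl = true ∧ m.Valid ∧ m.graph ⊆ O}

/-- All moves with graph contained in `O`. -/
def movesIn (O : Set (ℝ × ℝ)) : Set Move := {m | m.Valid ∧ m.graph ⊆ O}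

/-- Translation moves graph of an ensemble. -/
def grPlus (Ω : Set Move) : Set (ℝ × ℝ) :=
  {q | ∃ m ∈ Ω, m.isRefl = false ∧ q ∈ m.graph}

/-- Reflection moves graph of an ensemble. -/
def grMinus (Ω : Set Move) : Set (ℝ × ℝ) :=
  {q | ∃ m ∈ Ω, m.isRefl = true ∧ q ∈ m.graph}

/-- `dom(O)`: union of the domains of the moves in `movesIn O`. -/
def domOf (O : Set (ℝ × ℝ)) : Set ℝ := {x | ∃ m ∈ movesIn O, x ∈ m.dom}

/-- `im(O)`: union of the images of the moves in `movesIn O`. -/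
def imOf (O : Set (ℝ × ℝ)) : Set ℝ := {x | ∃ m ∈ movesIn O, x ∈ m.image}

/-- domain of a move ensemble. -/
def domEns (Ω : Set Move) : Set ℝ := {x | ∃ m ∈ Ω, x ∈ m.dom}

/-- image of a move ensemble. -/
def imEns (Ω : Set Move) : Set ℝ := {x | ∃ m ∈ Ω, x ∈ m.image}

/-- Convergence of a sequence of unrestricted moves (character, parameter):
all but finitely many have character `b`, and the parameters tend to `p`. -/
def ConvergesTo (γ : ℕ → Bool × ℝ) (b : Bool) (p : ℝ) : Prop :=
  (∀ᶠ i in atTop, (γ i).1 = b) ∧ Tendsto (fun i => (γ i).2) atTop (nhds p)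

/-- Axiom (lim): fixed-domain limits of moves. -/
def LimClosed (Ω : Set Move) : Prop :=
  ∀ D : Set ℝ, Move.ValidDom D →
    ∀ (γ : ℕ → Bool × ℝ) (b : Bool) (p : ℝ), ConvergesTo γ b p →
      (∀ i, Move.mk' (γ i).1 (γ i).2 D ∈ Ω) → Move.mk' b p D ∈ Ω

/-- `lim(Ω)`: the smallest superset of `Ω` satisfying (lim). -/
def limCl (Ω : Set Move) : Set Move := ⋂₀ {Γ | LimClosed Γ ∧ Ω ⊆ Γ}

/-- Axiom (arblim): limits of moves with converging domains. -/
def ArbLimClosed (Ω : Set Move) : Prop :=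
  ∀ (γ : ℕ → Bool × ℝ) (b : Bool) (p : ℝ) (l u : ℕ → ℝ) (l₀ u₀ : ℝ),
    ConvergesTo γ b p → Tendsto l atTop (nhds l₀) → Tendsto u atTop (nhds u₀) →
    (∀ i, Move.mk' (γ i).1 (γ i).2 (Set.Ioo (l i) (u i)) ∈ Ω) →
    Move.mk' b p (Set.Ioo l₀ u₀) ∈ Ω

/-- `arblim(Ω)`: the smallest superset of `Ω` satisfying (arblim). -/
def arblimCl (Ω : Set Move) : Set Move := ⋂₀ {Γ | ArbLimClosed Γ ∧ Ω ⊆ Γ}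

/-- Axiom (kaleido). -/
def Kaleidoscopic (Ω : Set Move) : Prop :=
  ∀ D I : Set ℝ, Move.ValidDom D → Move.ValidDom I →
    (tMoves (D ×ˢ I) ⊆ Ω ↔ rMoves (D ×ˢ I) ⊆ Ω)

/-- Axiom (extend_A): continuous domain extension relative to the open set `A`. -/
def ExtendClosed (A : Set ℝ) (Ω : Set Move) : Prop :=
  ∀ (b : Bool) (p : ℝ) (J : Set (Set ℝ)) (D : Set ℝ), J.Nonempty →
    (∀ I ∈ J, Move.mk' b p I ∈ Ω) → Move.ValidDom D →
    D ⊆ closure (⋃₀ J) ∩ A ∩ uEval b p ⁻¹' A →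
    Move.mk' b p D ∈ Ω

/-- `joinextend_A(Ω)`: the smallest superset of `Ω` satisfying (extend_A). -/
def joinExtendCl (A : Set ℝ) (Ω : Set Move) : Set Move :=
  ⋂₀ {Γ | ExtendClosed A Γ ∧ Ω ⊆ Γ}

/-- A closed move semigroup with respect to the open set `A`. -/
def ClosedMoveSemigroup (A : Set ℝ) (Γ : Set Move) : Prop :=
  IsMoveSemigroup Γ ∧ JoinClosed Γ ∧ Kaleidoscopic Γ ∧ LimClosed Γ ∧
    ExtendClosed A Γ

/-- The moves closure `ctscl(Ω)`: the smallest closed move semigroup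
(with respect to `A`) containing `Ω`. -/
def ctscl (A : Set ℝ) (Ω : Set Move) : Set Move :=
  ⋂₀ {Γ | ClosedMoveSemigroup A Γ ∧ Ω ⊆ Γ}

/-- The set of maximal elements of `Ω` in the restriction partial order. -/
def MaxOf (Ω : Set Move) : Set Move :=
  {m ∈ Ω | ∀ m' ∈ Ω, Move.le m m' → Move.le m' m}

section Aux

lemma mk'_empty (b : Bool) (p : ℝ) : Move.mk' b p (∅ : Set ℝ) = ⟨b, 0, ∅⟩ := by
  simp [Move.mk']

lemma mk'_of_ne (b : Bool) (p : ℝ) {D : Set ℝ} (h : D ≠ ∅) :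
    Move.mk' b p D = ⟨b, p, D⟩ := by simp [Move.mk', h]

lemma mk'_isRefl (b : Bool) (p : ℝ) (D : Set ℝ) : (Move.mk' b p D).isRefl = b := by
  simp [Move.mk']

lemma mk'_dom (b : Bool) (p : ℝ) (D : Set ℝ) : (Move.mk' b p D).dom = D := by
  simp [Move.mk']

lemma validDom_empty : Move.ValidDom (∅ : Set ℝ) :=
  ⟨isOpen_empty, Set.ordConnected_empty⟩

lemma validDom_Ioo (a c : ℝ) : Move.ValidDom (Set.Ioo a c) :=
  ⟨isOpen_Ioo, Set.ordConnected_Ioo⟩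

lemma eq_mk'_self {m : Move} (h : m.Valid) : m = Move.mk' m.isRefl m.param m.dom := by
  rcases eq_or_ne m.dom ∅ with hd | hd
  · have hp := h.2 hd
    cases m with
    | mk b p D =>
      simp only at hd hp
      rw [hd, mk'_empty, hp]
  · rw [mk'_of_ne _ _ hd]

lemma mk'_inj {b b' : Bool} {p p' : ℝ} {D D' : Set ℝ}
    (h : Move.mk' b p D = Move.mk' b' p' D') (hD : D ≠ ∅) :
    b = b' ∧ p = p' ∧ D = D' := by
  have hdom : D = D' := by
    have := congrArg Move.dom h
    simpa [mk'_dom] using this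
  subst hdom
  rw [mk'_of_ne _ _ hD, mk'_of_ne _ _ hD] at h
  injection h with h1 h2 h3
  exact ⟨h1, h2, rfl⟩

lemma Ioo_eq_Ioo {a b c d : ℝ} (h : Set.Ioo a b = Set.Ioo c d) (hab : a < b) :
    a = c ∧ b = d := by
  have hne : (Set.Ioo c d).Nonempty := h ▸ Set.nonempty_Ioo.2 hab
  have hcd : c < d := Set.nonempty_Ioo.1 hne
  constructor
  · rw [← csInf_Ioo hab, ← csInf_Ioo hcd, h]
  · rw [← csSup_Ioo hab, ← csSup_Ioo hcd, h]

lemma restrict_mem {Ω : Set Move} (hres : RestrictClosed Ω) {b : Bool} {p : ℝ}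
    {D D' : Set ℝ} (h : Move.mk' b p D ∈ Ω) (hsub : D' ⊆ D)
    (hv : Move.ValidDom D') : Move.mk' b p D' ∈ Ω := by
  have h2 := hres _ h D' (by rwa [mk'_dom]) hv
  rcases eq_or_ne D ∅ with hd | hd
  · have hD' : D' = ∅ := Set.subset_eq_empty hsub hd
    subst hD'
    rw [mk'_empty] at h2 ⊢
    simpa [mk'_empty, hd, Move.mk'] using h2
  · rwa [mk'_of_ne _ _ hd] at h2

end Aux
section Aux2

variable {Ω X Γ : Set Move}

lemma subset_limCl : Ω ⊆ limCl Ω := fun m hm => fun _ hΓ => hΓ.2 hm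

lemma subset_arblimCl : Ω ⊆ arblimCl Ω := fun m hm => fun _ hΓ => hΓ.2 hm

lemma subset_joinCl : X ⊆ joinCl X := fun m hm => fun _ hΓ => hΓ.2 hm

lemma limCl_subset (h1 : LimClosed Γ) (h2 : Ω ⊆ Γ) : limCl Ω ⊆ Γ :=
  Set.sInter_subset_of_mem ⟨h1, h2⟩

lemma arblimCl_subset (h1 : ArbLimClosed Γ) (h2 : Ω ⊆ Γ) : arblimCl Ω ⊆ Γ :=
  Set.sInter_subset_of_mem ⟨h1, h2⟩

lemma joinCl_subset (h1 : JoinClosed Γ) (h2 : X ⊆ Γ) : joinCl X ⊆ Γ :=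
  Set.sInter_subset_of_mem ⟨h1, h2⟩

lemma limClosed_limCl : LimClosed (limCl Ω) := by
  intro D hD γ b p hγ hmem
  intro Γ hΓ
  exact hΓ.1 D hD γ b p hγ (fun i => hmem i Γ hΓ)

lemma arblimClosed_arblimCl : ArbLimClosed (arblimCl Ω) := by
  intro γ b p l u l₀ u₀ hγ hl hu hmem
  intro Γ hΓ
  exact hΓ.1 γ b p l u l₀ u₀ hγ hl hu (fun i => hmem i Γ hΓ)

lemma joinClosed_joinCl : JoinClosed (joinCl X) := by
  constructor
  · intro m hm D' hsub hv Γ hΓ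
    exact hΓ.1.1 m (hm Γ hΓ) D' hsub hv
  · intro b p J hJ hmem hord Γ hΓ
    exact hΓ.1.2 b p J hJ (fun I hI => hmem I hI Γ hΓ) hord

lemma convergesTo_const (b : Bool) (p : ℝ) :
    ConvergesTo (fun _ => (b, p)) b p :=
  ⟨Filter.Eventually.of_forall (fun _ => rfl), tendsto_const_nhds⟩

lemma tendsto_of_dist_le (f g : ℕ → ℝ) (p : ℝ) (hf : Filter.Tendsto f Filter.atTop (nhds p))
    (h : ∀ i, dist (g i) (f i) ≤ 1 / (i + 1)) : Filter.Tendsto g Filter.atTop (nhds p) := by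
  rw [tendsto_iff_dist_tendsto_zero]
  apply squeeze_zero (fun i => dist_nonneg)
    (fun i => (dist_triangle (g i) (f i) p).trans (add_le_add (h i) le_rfl))
  have h1 : Filter.Tendsto (fun i : ℕ => dist (f i) p) Filter.atTop (nhds 0) :=
    tendsto_iff_dist_tendsto_zero.mp hf
  have h2 : Filter.Tendsto (fun i : ℕ => 1 / ((i : ℝ) + 1)) Filter.atTop (nhds 0) :=
    tendsto_one_div_add_atTop_nhds_zero_nat
  simpa using h2.add h1

lemma convergesTo_of_close {γ ε : ℕ → Bool × ℝ} {b : Bool} {p : ℝ}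
    (hγ : ConvergesTo γ b p) (hc : ∀ i, (ε i).1 = (γ i).1)
    (hd : ∀ i, dist (ε i).2 (γ i).2 ≤ 1 / (i + 1)) : ConvergesTo ε b p :=
  ⟨hγ.1.mono (fun i h => (hc i).trans h), tendsto_of_dist_le _ _ _ hγ.2 hd⟩

lemma eventually_dist_lt {f : ℕ → ℝ} {p : ℝ}
    (hf : Filter.Tendsto f Filter.atTop (nhds p)) {e : ℝ} (he : 0 < e) :
    ∀ᶠ j in Filter.atTop, dist (f j) p < e :=
  Metric.tendsto_nhds.mp hf e he

lemma one_div_pos_nat (i : ℕ) : (0 : ℝ) < 1 / (i + 1) := by positivity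

end Aux2
section Aux3

/-- One-step fixed-domain limits of `Ω` (includes `Ω` via constant sequences). -/
def LimOf (Ω : Set Move) : Set Move :=
  {m | ∃ (b : Bool) (p : ℝ) (D : Set ℝ), m = Move.mk' b p D ∧ Move.ValidDom D ∧
    ∃ δ : ℕ → Bool × ℝ, ConvergesTo δ b p ∧ ∀ j, Move.mk' (δ j).1 (δ j).2 D ∈ Ω}

/-- One-step arbitrary limits of `Ω`, together with `Ω`. -/
def ArbLimOf (Ω : Set Move) : Set Move :=
  Ω ∪ {m | ∃ (b : Bool) (p l₀ u₀ : ℝ), m = Move.mk' b p (Set.Ioo l₀ u₀) ∧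
    ∃ (δ : ℕ → Bool × ℝ) (l u : ℕ → ℝ), ConvergesTo δ b p ∧
      Filter.Tendsto l Filter.atTop (nhds l₀) ∧
      Filter.Tendsto u Filter.atTop (nhds u₀) ∧
      ∀ j, Move.mk' (δ j).1 (δ j).2 (Set.Ioo (l j) (u j)) ∈ Ω}

/-- Empty moves of `Ω` together with joins of local one-step bounded limits. -/
def CEns (Ω : Set Move) : Set Move :=
  {m | m ∈ Ω ∧ m.dom = ∅} ∪
  {m | ∃ (b : Bool) (p : ℝ) (D : Set ℝ), m = Move.mk' b p D ∧ Move.ValidDom D ∧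
    D ≠ ∅ ∧ ∀ x ∈ D, ∃ a c : ℝ, a < x ∧ x < c ∧ Set.Ioo a c ⊆ D ∧
      ∃ δ : ℕ → Bool × ℝ, ConvergesTo δ b p ∧
        ∀ j, Move.mk' (δ j).1 (δ j).2 (Set.Ioo a c) ∈ Ω}

variable {Ω : Set Move}

lemma subset_limOf (hΩ : IsMoveEnsemble Ω) : Ω ⊆ LimOf Ω := by
  intro m hm
  exact ⟨m.isRefl, m.param, m.dom, eq_mk'_self (hΩ m hm), (hΩ m hm).1,
    fun _ => (m.isRefl, m.param), convergesTo_const _ _,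
    fun _ => (eq_mk'_self (hΩ m hm)) ▸ hm⟩

lemma limClosed_limOf : LimClosed (LimOf Ω) := by
  intro D hD γ b p hγ hmem
  rcases eq_or_ne D ∅ with hDe | hDe
  · subst hDe
    -- find an index where the character is b
    obtain ⟨i, hi⟩ := hγ.1.exists
    obtain ⟨bi, pi, Di, heq, _, δ, hδ, hΩmem⟩ := hmem i
    have hDi : Di = (∅ : Set ℝ) := by
      have := congrArg Move.dom heq
      simpa [mk'_dom] using this.symm
    subst hDi
    have hbi : bi = (γ i).1 := by
      have := congrArg Move.isRefl heq
      simpa [mk'_isRefl] using this.symm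
    obtain ⟨j, hj⟩ := hδ.1.exists
    have hΩj : Move.mk' b p (∅ : Set ℝ) ∈ Ω := by
      have := hΩmem j
      rw [mk'_empty] at this ⊢
      rwa [hj, hbi, hi] at this
    exact ⟨b, p, ∅, rfl, validDom_empty, fun _ => (b, p), convergesTo_const _ _,
      fun _ => hΩj⟩
  · -- diagonalization
    have hwit : ∀ i, ∃ δ : ℕ → Bool × ℝ, ConvergesTo δ (γ i).1 (γ i).2 ∧
        ∀ j, Move.mk' (δ j).1 (δ j).2 D ∈ Ω := by
      intro i
      obtain ⟨bi, pi, Di, heq, _, δ, hδ, hΩmem⟩ := hmem i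
      have hDi : Di = D := by
        have := congrArg Move.dom heq
        simpa [mk'_dom] using this.symm
      subst hDi
      obtain ⟨hb, hp, -⟩ := mk'_inj heq hDe
      rw [hb, hp]
      exact ⟨δ, hδ, hΩmem⟩
    choose δ hδ hΩmem using hwit
    have hsel : ∀ i : ℕ, ∃ j, (δ i j).1 = (γ i).1 ∧
        dist (δ i j).2 (γ i).2 ≤ 1 / (i + 1) := by
      intro i
      exact ((hδ i).1.and ((eventually_dist_lt (hδ i).2 (one_div_pos_nat i)).mono
        (fun j hj => le_of_lt hj))).exists
    choose sel hsel1 hsel2 using hsel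
    refine ⟨b, p, D, rfl, hD, fun i => δ i (sel i),
      convergesTo_of_close hγ hsel1 hsel2, fun i => hΩmem i (sel i)⟩

lemma limOf_subset_cEns (hΩ : IsMoveEnsemble Ω) (hres : RestrictClosed Ω) :
    LimOf Ω ⊆ CEns Ω := by
  rintro m ⟨b, p, D, rfl, hD, δ, hδ, hmem⟩
  rcases eq_or_ne D ∅ with hDe | hDe
  · subst hDe
    left
    obtain ⟨j, hj⟩ := hδ.1.exists
    refine ⟨?_, mk'_dom _ _ _⟩
    have := hmem j
    rw [mk'_empty] at this ⊢
    rwa [hj] at this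
  · right
    refine ⟨b, p, D, rfl, hD, hDe, fun x hx => ?_⟩
    obtain ⟨e, he, hball⟩ := Metric.isOpen_iff.mp hD.1 x hx
    rw [Real.ball_eq_Ioo] at hball
    exact ⟨x - e, x + e, by linarith, by linarith, hball, δ, hδ,
      fun j => restrict_mem hres (hmem j) hball (validDom_Ioo _ _)⟩

end Aux3
section Aux4

variable {Ω : Set Move}

lemma subset_arbLimOf : Ω ⊆ ArbLimOf Ω := Set.subset_union_left

/-- Witness extraction: every representation of a member of `ArbLimOf Ω` as a
bounded-interval move admits matching witness sequences from `Ω`. -/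
lemma arbLimOf_witness (hres : RestrictClosed Ω) {c : Bool} {q l₀ u₀ : ℝ}
    (h : Move.mk' c q (Set.Ioo l₀ u₀) ∈ ArbLimOf Ω) :
    ∃ (δ : ℕ → Bool × ℝ) (l u : ℕ → ℝ), ConvergesTo δ c q ∧
      Filter.Tendsto l Filter.atTop (nhds l₀) ∧
      Filter.Tendsto u Filter.atTop (nhds u₀) ∧
      ∀ j, Move.mk' (δ j).1 (δ j).2 (Set.Ioo (l j) (u j)) ∈ Ω := by
  rcases h with hΩm | ⟨b, p, l', u', heq, δ, l, u, hδ, hl, hu, hmem⟩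
  · exact ⟨fun _ => (c, q), fun _ => l₀, fun _ => u₀, convergesTo_const _ _,
      tendsto_const_nhds, tendsto_const_nhds, fun _ => hΩm⟩
  · have hdom : Set.Ioo l₀ u₀ = Set.Ioo l' u' := by
      have := congrArg Move.dom heq
      simpa [mk'_dom] using this
    rcases eq_or_ne (Set.Ioo l₀ u₀) ∅ with hne | hne
    · -- empty case: the move is the empty move of character c; it lies in Ω
      have hbc : c = b := by
        have := congrArg Move.isRefl heq
        simpa [mk'_isRefl] using this
      obtain ⟨j, hj⟩ := hδ.1.exists
      have hΩe : Move.mk' (δ j).1 (δ j).2 (∅ : Set ℝ) ∈ Ω :=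
        restrict_mem hres (hmem j) (Set.empty_subset _) validDom_empty
      have hΩm : Move.mk' c q (Set.Ioo l₀ u₀) ∈ Ω := by
        rw [hne, mk'_empty]
        rw [mk'_empty] at hΩe
        rwa [hj, ← hbc] at hΩe
      exact ⟨fun _ => (c, q), fun _ => l₀, fun _ => u₀, convergesTo_const _ _,
        tendsto_const_nhds, tendsto_const_nhds, fun _ => hΩm⟩
    · have hlt : l₀ < u₀ := by
        rcases Set.nonempty_Ioo.1 (Set.nonempty_iff_ne_empty.2 hne) with h'
        exact h'
      obtain ⟨hl', hu'⟩ := Ioo_eq_Ioo hdom hlt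
      obtain ⟨hb, hp, -⟩ := mk'_inj heq hne
      subst hl'; subst hu'
      rw [hb, hp]
      exact ⟨δ, l, u, hδ, hl, hu, hmem⟩

lemma arblimClosed_arbLimOf (hres : RestrictClosed Ω) : ArbLimClosed (ArbLimOf Ω) := by
  intro γ b p l u l₀ u₀ hγ hl hu hmem
  have hwit := fun i => arbLimOf_witness hres (hmem i)
  choose δ lw uw hδ hlw huw hΩmem using hwit
  have hsel : ∀ i : ℕ, ∃ j, (δ i j).1 = (γ i).1 ∧
      dist (δ i j).2 (γ i).2 ≤ 1 / (i + 1) ∧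
      dist (lw i j) (l i) ≤ 1 / (i + 1) ∧ dist (uw i j) (u i) ≤ 1 / (i + 1) := by
    intro i
    have h1 := (hδ i).1
    have h2 := (eventually_dist_lt (hδ i).2 (one_div_pos_nat i)).mono
      (fun j hj => le_of_lt hj)
    have h3 := (eventually_dist_lt (hlw i) (one_div_pos_nat i)).mono
      (fun j hj => le_of_lt hj)
    have h4 := (eventually_dist_lt (huw i) (one_div_pos_nat i)).mono
      (fun j hj => le_of_lt hj)
    exact ((h1.and (h2.and (h3.and h4))).mono (fun j hj => ⟨hj.1, hj.2.1, hj.2.2.1, hj.2.2.2⟩)).exists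
  choose sel hs1 hs2 hs3 hs4 using hsel
  right
  refine ⟨b, p, l₀, u₀, rfl, fun i => δ i (sel i), fun i => lw i (sel i),
    fun i => uw i (sel i), convergesTo_of_close hγ hs1 hs2,
    tendsto_of_dist_le _ _ _ hl hs3, tendsto_of_dist_le _ _ _ hu hs4,
    fun i => hΩmem i (sel i)⟩

lemma subset_cEns (hΩ : IsMoveEnsemble Ω) (hres : RestrictClosed Ω) : Ω ⊆ CEns Ω :=
  (subset_limOf hΩ).trans (limOf_subset_cEns hΩ hres)

lemma arbLimOf_subset_cEns (hΩ : IsMoveEnsemble Ω) (hres : RestrictClosed Ω) :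
    ArbLimOf Ω ⊆ CEns Ω := by
  rintro m (hΩm | ⟨b, p, l₀, u₀, rfl, δ, l, u, hδ, hl, hu, hmem⟩)
  · exact subset_cEns hΩ hres hΩm
  rcases eq_or_ne (Set.Ioo l₀ u₀) ∅ with hne | hne
  · left
    rw [hne]
    obtain ⟨j, hj⟩ := hδ.1.exists
    have hΩe : Move.mk' (δ j).1 (δ j).2 (∅ : Set ℝ) ∈ Ω :=
      restrict_mem hres (hmem j) (Set.empty_subset _) validDom_empty
    refine ⟨?_, mk'_dom _ _ _⟩
    rw [mk'_empty] at hΩe ⊢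
    rwa [hj] at hΩe
  · right
    refine ⟨b, p, Set.Ioo l₀ u₀, rfl, validDom_Ioo _ _, hne, fun x hx => ?_⟩
    obtain ⟨a, ha⟩ := exists_between hx.1
    obtain ⟨c, hc⟩ := exists_between hx.2
    have hev : ∀ᶠ j in Filter.atTop, l j < a ∧ c < u j := by
      have h1 : ∀ᶠ j in Filter.atTop, l j < a := hl.eventually_lt_const ha.1
      have h2 : ∀ᶠ j in Filter.atTop, c < u j := hu.eventually_const_lt hc.2
      exact h1.and h2
    obtain ⟨N, hN⟩ := Filter.eventually_atTop.mp hev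
    refine ⟨a, c, ha.2, hc.1, Set.Ioo_subset_Ioo (le_of_lt ha.1) (le_of_lt hc.2),
      fun j => δ (j + N), ?_, fun j => ?_⟩
    · constructor
      · exact (Filter.tendsto_add_atTop_nat N).eventually hδ.1
      · exact hδ.2.comp (Filter.tendsto_add_atTop_nat N)
    · refine restrict_mem hres (hmem (j + N)) ?_ (validDom_Ioo _ _)
      have := hN (j + N) (Nat.le_add_left N j)
      exact Set.Ioo_subset_Ioo (le_of_lt this.1) (le_of_lt this.2)

end Aux4
section Aux5

variable {Ω X : Set Move}

lemma joinClosed_cEns (hΩ : IsMoveEnsemble Ω) (hres : RestrictClosed Ω) :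
    JoinClosed (CEns Ω) := by
  constructor
  · -- restrict-closed
    rintro m (⟨hm, hd⟩ | ⟨b, p, D, rfl, hD, hne, hcov⟩) D' hsub hv
    · have hD' : D' = ∅ := Set.subset_eq_empty hsub hd
      subst hD'
      left
      rw [mk'_empty]
      have : m = Move.mk m.isRefl 0 ∅ := by
        cases m with
        | mk b p D =>
          simp only at hd ⊢
          have hp := (hΩ _ hm).2 hd
          simp only at hp
          rw [hd, hp]
      rw [← this]
      exact ⟨hm, hd⟩
    · rw [mk'_dom] at hsub
      rw [mk'_isRefl]
      rw [mk'_of_ne _ _ hne]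
      simp only
      rcases eq_or_ne D' ∅ with hD'e | hD'e
      · subst hD'e
        left
        obtain ⟨x, hx⟩ := Set.nonempty_iff_ne_empty.2 hne
        obtain ⟨a, c, ha, hc, hIsub, δ, hδ, hmem⟩ := hcov x hx
        obtain ⟨j, hj⟩ := hδ.1.exists
        have hΩe : Move.mk' (δ j).1 (δ j).2 (∅ : Set ℝ) ∈ Ω :=
          restrict_mem hres (hmem j) (Set.empty_subset _) validDom_empty
        refine ⟨?_, mk'_dom _ _ _⟩
        rw [mk'_empty] at hΩe ⊢
        rwa [hj] at hΩe
      · right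
        refine ⟨b, p, D', rfl, hv, hD'e, fun x hx => ?_⟩
        obtain ⟨a, c, ha, hc, hIsub, δ, hδ, hmem⟩ := hcov x (hsub hx)
        obtain ⟨e, he, hball⟩ := Metric.isOpen_iff.mp hv.1 x hx
        rw [Real.ball_eq_Ioo] at hball
        refine ⟨max a (x - e), min c (x + e), by simp [ha, he, sub_lt_self],
          by simp [hc, he], ?_, δ, hδ, fun j => ?_⟩
        · exact (Set.Ioo_subset_Ioo (le_max_right _ _) (min_le_right _ _)).trans hball
        · exact restrict_mem hres (hmem j)
            (Set.Ioo_subset_Ioo (le_max_left _ _) (min_le_left _ _)) (validDom_Ioo _ _)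
  · -- join-closed
    intro b p J hJ hmem hord
    rcases eq_or_ne (⋃₀ J) ∅ with hU | hU
    · obtain ⟨I₀, hI₀⟩ := hJ
      have hI₀e : I₀ = ∅ :=
        Set.subset_eq_empty ((Set.subset_sUnion_of_mem hI₀).trans hU.subset) rfl
      rw [hU]
      rw [hI₀e] at hI₀
      exact hmem ∅ hI₀
    · right
      have hopen : ∀ I ∈ J, IsOpen I := by
        intro I hI
        rcases hmem I hI with ⟨_, hd⟩ | ⟨b', p', D', heq, hv, _, _⟩
        · rw [mk'_dom] at hd
          rw [hd]; exact isOpen_empty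
        · have : I = D' := by
            have := congrArg Move.dom heq
            simpa [mk'_dom] using this
          rw [this]; exact hv.1
      refine ⟨b, p, ⋃₀ J, rfl, ⟨isOpen_sUnion hopen, hord⟩, hU, fun x hx => ?_⟩
      obtain ⟨I, hIJ, hxI⟩ := hx
      have hIne : I ≠ ∅ := Set.nonempty_iff_ne_empty.1 ⟨x, hxI⟩
      rcases hmem I hIJ with ⟨_, hd⟩ | ⟨b', p', D', heq, hv, hne', hcov⟩
      · rw [mk'_dom] at hd; exact absurd hd hIne
      · have hID : I = D' := by
          have := congrArg Move.dom heq
          simpa [mk'_dom] using this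
        subst hID
        obtain ⟨hb, hp, -⟩ := mk'_inj heq hIne
        obtain ⟨a, c, ha, hc, hIsub, δ, hδ, hmem'⟩ := hcov x hxI
        exact ⟨a, c, ha, hc, hIsub.trans (Set.subset_sUnion_of_mem hIJ),
          δ, hb ▸ hp ▸ hδ, hmem'⟩

lemma cEns_subset_joinCl (hΩX : Ω ⊆ X)
    (hpiece : ∀ (b : Bool) (p a c : ℝ) (δ : ℕ → Bool × ℝ), ConvergesTo δ b p →
      (∀ j, Move.mk' (δ j).1 (δ j).2 (Set.Ioo a c) ∈ Ω) →
      Move.mk' b p (Set.Ioo a c) ∈ X) :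
    CEns Ω ⊆ joinCl X := by
  rintro m (⟨hm, _⟩ | ⟨b, p, D, rfl, hvD, hne, hcov⟩)
  · exact subset_joinCl (hΩX hm)
  · set J : Set (Set ℝ) := {I | I ⊆ D ∧ Move.mk' b p I ∈ X} with hJdef
    have hU : ⋃₀ J = D := by
      apply subset_antisymm (Set.sUnion_subset fun I hI => hI.1)
      intro x hx
      obtain ⟨a, c, ha, hc, hsub, δ, hδ, hmem⟩ := hcov x hx
      exact ⟨Set.Ioo a c, ⟨hsub, hpiece b p a c δ hδ hmem⟩, ha, hc⟩
    have hJne : J.Nonempty := by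
      obtain ⟨x, hx⟩ := Set.nonempty_iff_ne_empty.2 hne
      obtain ⟨a, c, ha, hc, hsub, δ, hδ, hmem⟩ := hcov x hx
      exact ⟨Set.Ioo a c, hsub, hpiece b p a c δ hδ hmem⟩
    have := joinClosed_joinCl.2 b p J hJne
      (fun I hI => subset_joinCl hI.2) (by rw [hU]; exact hvD.2)
    rwa [hU] at this

end Aux5
/-- For a join-closed move ensemble, the joined limits closure and the joined
arbitrary-limits closure coincide. -/
theorem joinCl_limCl_eq_joinCl_arblimCl (Ω : Set Move)
    (hΩ : IsMoveEnsemble Ω) (hjoin : JoinClosed Ω) :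
    joinCl (limCl Ω) = joinCl (arblimCl Ω) := by
  have hres := hjoin.1
  have h1 : joinCl (limCl Ω) = CEns Ω := by
    apply subset_antisymm
    · exact joinCl_subset (joinClosed_cEns hΩ hres)
        ((limCl_subset limClosed_limOf (subset_limOf hΩ)).trans
          (limOf_subset_cEns hΩ hres))
    · exact cEns_subset_joinCl subset_limCl
        (fun b p a c δ hδ hmem => limClosed_limCl _ (validDom_Ioo a c) δ b p hδ
          (fun j => subset_limCl (hmem j)))
  have h2 : joinCl (arblimCl Ω) = CEns Ω := by
    apply subset_antisymm
    · exact joinCl_subset (joinClosed_cEns hΩ hres)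
        ((arblimCl_subset (arblimClosed_arbLimOf hres) subset_arbLimOf).trans
          (arbLimOf_subset_cEns hΩ hres))
    · exact cEns_subset_joinCl subset_arblimCl
        (fun b p a c δ hδ hmem => arblimClosed_arblimCl δ b p
          (fun _ => a) (fun _ => c) a c hδ tendsto_const_nhds tendsto_const_nhds
          (fun j => subset_arblimCl (hmem j)))
  rw [h1, h2]
end
end

section
/- Limits of respected moves: Let D be an open interval and let θ : ℝ → ℝ be continuous on D. If γ^i is a sequence of unrestricted moves converging to an unrestricted move γ such that θ respects γ^i|_D for all i, then θ also respects γ|_D. -/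
open Filter Set

noncomputable section

/-- Limits of respected moves: if `θ` is continuous on the open interval `D`
and respects all `γ^i|_D` where `γ^i → γ`, then `θ` respects `γ|_D`. -/
theorem respects_limit_move (D : Set ℝ) (hD : Move.ValidDom D)
    (θ : ℝ → ℝ) (hθ : ContinuousOn θ D)
    (γ : ℕ → Bool × ℝ) (b : Bool) (p : ℝ) (hconv : ConvergesTo γ b p)
    (hresp : ∀ i, Respects θ (Move.mk' (γ i).1 (γ i).2 D)) :
    Respects θ (Move.mk' b p D) := by
  rcases eq_or_ne D ∅ with hDe | hDn
  · exact ⟨0, by simp [hDe, Move.mk']⟩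
  obtain ⟨x₀, hx₀⟩ := Set.nonempty_iff_ne_empty.2 hDn
  set χ : ℝ := if b then -1 else 1 with hχ
  -- extract eventual constants
  have hC : ∀ i, ∃ c : ℝ, ∀ x ∈ D,
      θ (uEval (γ i).1 (γ i).2 x) = (if (γ i).1 then (-1:ℝ) else 1) * θ x + c := by
    intro i
    obtain ⟨c, hc⟩ := hresp i
    refine ⟨c, fun x hx => ?_⟩
    have := hc x (by simpa [Move.mk'] using hx)
    simpa [Move.mk', Move.eval, Move.chi, hDn] using this
  choose c hc using hC
  set y : ℝ → ℕ → ℝ := fun x i => x + (if b then (γ i).2 - p else p - (γ i).2) with hy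
  have hyt : ∀ x : ℝ, Tendsto (y x) atTop (nhds x) := by
    intro x
    have h2 := hconv.2
    have h3 : Tendsto (fun i => x + (if b then (γ i).2 - p else p - (γ i).2)) atTop
        (nhds (x + (if b then p - p else p - p))) := by
      apply tendsto_const_nhds.add
      cases b
      · simpa using h2.const_sub p
      · simpa using h2.sub_const p
    simpa using h3
  have hmemD : ∀ x ∈ D, ∀ᶠ i in atTop, y x i ∈ D := fun x hx =>
    (hyt x).eventually (hD.1.mem_nhds hx)
  have hkey : ∀ x ∈ D, ∀ᶠ i in atTop, θ (uEval b p x) = χ * θ (y x i) + c i := by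
    intro x hx
    filter_upwards [hmemD x hx, hconv.1] with i hiD hib
    have h1 := hc i (y x i) hiD
    have h2 : uEval (γ i).1 (γ i).2 (y x i) = uEval b p x := by
      rw [hib]; cases b <;> simp [uEval, hy] <;> ring
    rw [h2, hib] at h1
    exact h1
  have hθt : ∀ x ∈ D, Tendsto (fun i => θ (y x i)) atTop (nhds (θ x)) := by
    intro x hx
    have h4 : Tendsto (y x) atTop (nhdsWithin x D) :=
      tendsto_nhdsWithin_of_tendsto_nhds_of_eventually_within _ (hyt x) (hmemD x hx)
    exact (hθ x hx).tendsto.comp h4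
  set cinf : ℝ := θ (uEval b p x₀) - χ * θ x₀ with hcinf
  have hct : Tendsto c atTop (nhds cinf) := by
    have h1 : ∀ᶠ i in atTop, c i = θ (uEval b p x₀) - χ * θ (y x₀ i) := by
      filter_upwards [hkey x₀ hx₀] with i hi
      linarith [hi]
    have h2 : Tendsto (fun i => θ (uEval b p x₀) - χ * θ (y x₀ i)) atTop (nhds cinf) := by
      rw [hcinf]
      exact tendsto_const_nhds.sub (tendsto_const_nhds.mul (hθt x₀ hx₀))
    exact h2.congr' (h1.mono fun i h => h.symm)
  refine ⟨cinf, fun x hx => ?_⟩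
  have hx' : x ∈ D := by simpa [Move.mk'] using hx
  have hlim : Tendsto (fun i => χ * θ (y x i) + c i) atTop (nhds (χ * θ x + cinf)) :=
    (tendsto_const_nhds.mul (hθt x hx')).add hct
  have hconst : Tendsto (fun _ : ℕ => θ (uEval b p x)) atTop (nhds (θ (uEval b p x))) :=
    tendsto_const_nhds
  have hfin := tendsto_nhds_unique (hconst.congr' ((hkey x hx').mono fun i h => h)) hlim
  simpa [Move.mk', Move.eval, Move.chi, hDn, hχ] using hfin
end
end
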